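/- Let α ∈ ℝ \ ℚ and let g be a germ of a holomorphic function with g(0) = 0 that commutes with Q_α on a neighbourhood of 0 and satisfies g'(0) = e^{2πikα} for some k ∈ ℤ. Then g equals the iterate Q_α^∘k near 0; precisely, there exist m, n ∈ ℕ with (n : ℤ) − (m : ℤ) = k such that Q_α^∘m ∘ g = Q_α^∘n on a neighbourhood of 0. -/

import Mathlib

open Filter Topology

/-- The quadratic map `Q_α(z) = e^{2πiα} z + z²`. -/
noncomputable def Q (α : ℝ) : ℂ → ℂ :=
  fun z => Complex.exp (2 * Real.pi * α * Complex.I) * z + z ^ 2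

lemma Q_zero (α : ℝ) : Q α 0 = 0 := by simp [Q]

lemma lam_pow_eq_one (α : ℝ) (hα : Irrational α) {j : ℕ}
    (h : Complex.exp (2 * Real.pi * α * Complex.I) ^ j = 1) : j = 0 := by
  by_contra hj
  rw [← Complex.exp_nat_mul, Complex.exp_eq_one_iff] at h
  obtain ⟨n, hn⟩ := h
  have hπ : (2 * (Real.pi : ℂ) * Complex.I) ≠ 0 := by
    simp [Real.pi_ne_zero, Complex.I_ne_zero]
  have h2 : (((j : ℝ) * α : ℝ) : ℂ) * (2 * (Real.pi : ℂ) * Complex.I)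
      = (n : ℂ) * (2 * (Real.pi : ℂ) * Complex.I) := by
    push_cast
    linear_combination hn
  have h3 : (((j : ℝ) * α : ℝ) : ℂ) = (n : ℂ) := mul_right_cancel₀ hπ h2
  have h4 : (j : ℝ) * α = (n : ℝ) := by exact_mod_cast h3
  exact (hα.natCast_mul hj).ne_int n h4

lemma Q_analytic (α : ℝ) (z : ℂ) : AnalyticAt ℂ (Q α) z := by
  unfold Q
  exact (analyticAt_const.mul analyticAt_id).add (analyticAt_id.pow 2)

lemma commute_germs_eq (α : ℝ) (hα : Irrational α) (f₁ f₂ : ℂ → ℂ)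
    (h₁ : AnalyticAt ℂ f₁ 0) (h₂ : AnalyticAt ℂ f₂ 0)
    (h₁0 : f₁ 0 = 0) (h₂0 : f₂ 0 = 0) (hd : deriv f₁ 0 = deriv f₂ 0)
    (hc₁ : ∀ᶠ z in 𝓝 (0 : ℂ), f₁ (Q α z) = Q α (f₁ z))
    (hc₂ : ∀ᶠ z in 𝓝 (0 : ℂ), f₂ (Q α z) = Q α (f₂ z)) :
    ∀ᶠ z in 𝓝 (0 : ℂ), f₁ z = f₂ z := by
  set lam : ℂ := Complex.exp (2 * Real.pi * α * Complex.I) with hlam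
  set F : ℂ → ℂ := fun z => f₁ z - f₂ z with hFdef
  have hF : AnalyticAt ℂ F 0 := h₁.sub h₂
  by_contra hne
  have hne' : ¬ ∀ᶠ z in 𝓝 (0 : ℂ), F z = 0 := by
    intro hzero
    exact hne (hzero.mono fun z hz => by simpa [hFdef, sub_eq_zero] using hz)
  have horder : analyticOrderAt F 0 ≠ ⊤ := fun ht => hne' (analyticOrderAt_eq_top.mp ht)
  obtain ⟨d, hdord⟩ : ∃ d : ℕ, analyticOrderAt F 0 = d := by
    lift analyticOrderAt F 0 to ℕ using horder with d hd
    exact ⟨d, rfl⟩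
  obtain ⟨h, hh, hh0, heq⟩ := (hF.analyticOrderAt_eq_natCast (n := d)).mp hdord
  simp only [sub_zero] at heq
  -- functional identity
  have hQcont : Continuous (Q α) := by
    unfold Q; continuity
  have hQ0 : Q α 0 = 0 := Q_zero α
  have hQtend : Filter.Tendsto (Q α) (𝓝 0) (𝓝 0) := by
    have := hQcont.continuousAt (x := (0:ℂ))
    rwa [ContinuousAt, hQ0] at this
  have heqQ : ∀ᶠ z in 𝓝 (0 : ℂ), F (Q α z) = (Q α z) ^ d • h (Q α z) := hQtend.eventually heq
  -- key eventual equation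
  have hkey : ∀ᶠ z in 𝓝 (0 : ℂ),
      z ^ d * ((lam + z) ^ d * h (Q α z)) = z ^ d * (h z * (lam + f₁ z + f₂ z)) := by
    filter_upwards [hc₁, hc₂, heq, heqQ] with z e₁ e₂ e₃ e₄
    have hFQ : F (Q α z) = F z * (lam + f₁ z + f₂ z) := by
      have h5 : F (Q α z) = Q α (f₁ z) - Q α (f₂ z) := by
        simp only [hFdef]; rw [e₁, e₂]
      rw [h5, hFdef]; simp only [Q, ← hlam]; ring
    have hQfac : (Q α z) ^ d = z ^ d * (lam + z) ^ d := by
      have : Q α z = z * (lam + z) := by simp only [Q, ← hlam]; ring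
      rw [this, mul_pow]
    calc z ^ d * ((lam + z) ^ d * h (Q α z)) = (Q α z) ^ d * h (Q α z) := by
          rw [hQfac]; ring
      _ = F (Q α z) := by rw [e₄]; simp [smul_eq_mul]
      _ = F z * (lam + f₁ z + f₂ z) := hFQ
      _ = z ^ d * (h z * (lam + f₁ z + f₂ z)) := by rw [e₃]; simp [smul_eq_mul]; ring
  -- cancel z^d on the punctured neighborhood
  have hkey' : ∀ᶠ z in 𝓝[≠] (0 : ℂ),
      (lam + z) ^ d * h (Q α z) = h z * (lam + f₁ z + f₂ z) := by
    filter_upwards [nhdsWithin_le_nhds hkey, self_mem_nhdsWithin] with z e hz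
    exact mul_left_cancel₀ (pow_ne_zero d hz) e
  -- take limits
  have hcont₁ : ContinuousAt (fun z => (lam + z) ^ d * h (Q α z)) 0 := by
    apply ContinuousAt.mul
    · fun_prop
    · exact (hh.continuousAt.comp_of_eq hQcont.continuousAt hQ0)
  have hcont₂ : ContinuousAt (fun z => h z * (lam + f₁ z + f₂ z)) 0 := by
    exact hh.continuousAt.mul ((continuousAt_const.add h₁.continuousAt).add h₂.continuousAt)
  have hlim : (lam + 0) ^ d * h (Q α 0) = h 0 * (lam + f₁ 0 + f₂ 0) := by
    have t₁ : Filter.Tendsto (fun z => (lam + z) ^ d * h (Q α z)) (𝓝[≠] (0:ℂ))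
        (𝓝 ((lam + 0) ^ d * h (Q α 0))) := hcont₁.continuousWithinAt.tendsto
    have hkey'' : (fun z => h z * (lam + f₁ z + f₂ z)) =ᶠ[𝓝[≠] (0:ℂ)]
        (fun z => (lam + z) ^ d * h (Q α z)) := Filter.EventuallyEq.symm hkey'
    have t₂ : Filter.Tendsto (fun z => (lam + z) ^ d * h (Q α z)) (𝓝[≠] (0:ℂ))
        (𝓝 (h 0 * (lam + f₁ 0 + f₂ 0))) :=
      hcont₂.continuousWithinAt.tendsto.congr' hkey''
    exact tendsto_nhds_unique t₁ t₂
  rw [hQ0, h₁0, h₂0] at hlim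
  simp only [add_zero] at hlim
  have hlam_ne : lam ≠ 0 := Complex.exp_ne_zero _
  have hpow : lam ^ d = lam := mul_right_cancel₀ hh0 (by rw [hlim]; ring)
  -- d must be 1
  have hd1 : d = 1 := by
    rcases Nat.eq_zero_or_pos d with h0 | hpos
    · exfalso
      have h1 : lam = 1 := by rw [← hpow, h0, pow_zero]
      have : lam ^ 1 = 1 := by rw [pow_one, h1]
      simpa using lam_pow_eq_one α hα this
    · have : lam ^ (d - 1) = 1 := by
        have : lam ^ (d - 1) * lam = 1 * lam := by
          rw [one_mul, ← pow_succ, Nat.sub_add_cancel hpos, hpow]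
        exact mul_right_cancel₀ hlam_ne this
      have := lam_pow_eq_one α hα this
      omega
  -- derivative contradiction
  subst hd1
  have hderivF : deriv F 0 = 0 := by
    have := (h₁.differentiableAt.sub h₂.differentiableAt)
    rw [hFdef]
    rw [deriv_fun_sub h₁.differentiableAt h₂.differentiableAt, hd, sub_self]
  have hFeq : F =ᶠ[𝓝 (0:ℂ)] fun z => z * h z := by
    filter_upwards [heq] with z hz
    simpa [smul_eq_mul] using hz
  have : deriv F 0 = h 0 := by
    rw [hFeq.deriv_eq]
    have hd : HasDerivAt (fun z : ℂ => z * h z) (1 * h 0 + 0 * deriv h 0) 0 :=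
      (hasDerivAt_id 0).mul hh.differentiableAt.hasDerivAt
    simpa using hd.deriv
  rw [hderivF] at this
  exact hh0 this.symm

lemma Q_iter_zero (α : ℝ) (m : ℕ) : (Q α)^[m] 0 = 0 := by
  induction m with
  | zero => rfl
  | succ m ih => rw [Function.iterate_succ_apply', ih, Q_zero]

lemma Q_iter_comm (α : ℝ) (m : ℕ) (z : ℂ) : (Q α)^[m] (Q α z) = Q α ((Q α)^[m] z) := by
  rw [← Function.iterate_succ_apply, Function.iterate_succ_apply']

lemma Q_iter_analytic (α : ℝ) (m : ℕ) : AnalyticAt ℂ ((Q α)^[m]) 0 := by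
  induction m with
  | zero => exact analyticAt_id
  | succ m ih =>
    rw [Function.iterate_succ']
    exact (Q_analytic α _).comp ih

lemma Q_hasDerivAt (α : ℝ) (z : ℂ) :
    HasDerivAt (Q α) (Complex.exp (2 * Real.pi * α * Complex.I) + 2 * z) z := by
  have h1 : HasDerivAt (fun w : ℂ => Complex.exp (2 * Real.pi * α * Complex.I) * w)
      (Complex.exp (2 * Real.pi * α * Complex.I)) z := by
    simpa using (hasDerivAt_id z).const_mul (Complex.exp (2 * Real.pi * α * Complex.I))
  have h2 : HasDerivAt (fun w : ℂ => w ^ 2) (2 * z) z := by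
    simpa using hasDerivAt_pow 2 z
  exact h1.add h2

lemma Q_iter_hasDerivAt (α : ℝ) (m : ℕ) :
    HasDerivAt ((Q α)^[m]) (Complex.exp (2 * Real.pi * α * Complex.I) ^ m) 0 := by
  induction m with
  | zero => simpa using hasDerivAt_id (0 : ℂ)
  | succ m ih =>
    rw [Function.iterate_succ']
    have hQ : HasDerivAt (Q α) (Complex.exp (2 * Real.pi * α * Complex.I)) ((Q α)^[m] 0) := by
      simpa [Q_iter_zero] using Q_hasDerivAt α 0
    have := HasDerivAt.comp (0 : ℂ) hQ ih
    simpa [pow_succ, mul_comm] using this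


/-- For irrational `α`, a germ `g` with `g(0) = 0`, commuting with `Q_α` near `0` and
with `g'(0) = e^{2πikα}` for some `k ∈ ℤ`, equals the iterate `Q_α^∘k` near `0`:
there are `m, n ∈ ℕ` with `n − m = k` and `Q_α^∘m ∘ g = Q_α^∘n` near `0`. -/
theorem germ_with_multiplier_is_iterate (α : ℝ) (hα : Irrational α)
    (g : ℂ → ℂ) (hg : AnalyticAt ℂ g 0) (hg0 : g 0 = 0) (k : ℤ)
    (hg' : deriv g 0 = Complex.exp (2 * Real.pi * ((k : ℝ) * α) * Complex.I))
    (hcomm : ∀ᶠ z in 𝓝 (0 : ℂ), g (Q α z) = Q α (g z)) :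
    ∃ m n : ℕ, (n : ℤ) - (m : ℤ) = k ∧
      ∀ᶠ z in 𝓝 (0 : ℂ), (Q α)^[m] (g z) = (Q α)^[n] z := by
  set lam : ℂ := Complex.exp (2 * Real.pi * α * Complex.I) with hlam
  set m : ℕ := (-k).toNat with hm
  set n : ℕ := k.toNat with hn
  have hmn : (n : ℤ) - (m : ℤ) = k := by omega
  refine ⟨m, n, hmn, ?_⟩
  set f₁ : ℂ → ℂ := fun z => (Q α)^[m] (g z) with hf₁
  have h₁ : AnalyticAt ℂ f₁ 0 := by
    have := Q_iter_analytic α m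
    rw [← hg0] at this
    exact this.comp hg
  have h₂ : AnalyticAt ℂ ((Q α)^[n]) 0 := Q_iter_analytic α n
  have h₁0 : f₁ 0 = 0 := by rw [hf₁]; simp [hg0, Q_iter_zero]
  have h₂0 : (Q α)^[n] 0 = 0 := Q_iter_zero α n
  -- derivatives
  have hgd : HasDerivAt g (deriv g 0) 0 := hg.differentiableAt.hasDerivAt
  have hiterm : HasDerivAt ((Q α)^[m]) (lam ^ m) (g 0) := by
    rw [hg0]; exact Q_iter_hasDerivAt α m
  have hD1 : HasDerivAt f₁ (lam ^ m * deriv g 0) 0 := HasDerivAt.comp 0 hiterm hgd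
  have hderiv_eq : lam ^ m * deriv g 0 = lam ^ n := by
    rw [hg', hlam, ← Complex.exp_nat_mul, ← Complex.exp_nat_mul, ← Complex.exp_add]
    congr 1
    have hC : (m : ℂ) + (k : ℂ) = (n : ℂ) := by
      have : (m : ℤ) + k = (n : ℤ) := by omega
      exact_mod_cast congrArg (fun x : ℤ => (x : ℂ)) this
    push_cast
    linear_combination (2 * (Real.pi : ℂ) * (α : ℂ) * Complex.I) * hC
  have hd : deriv f₁ 0 = deriv ((Q α)^[n]) 0 := by
    rw [hD1.deriv, (Q_iter_hasDerivAt α n).deriv, hderiv_eq]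
  -- commutation
  have hc₁ : ∀ᶠ z in 𝓝 (0 : ℂ), f₁ (Q α z) = Q α (f₁ z) := by
    filter_upwards [hcomm] with z hz
    rw [hf₁]
    simp only [hz, Q_iter_comm]
  have hc₂ : ∀ᶠ z in 𝓝 (0 : ℂ), (Q α)^[n] (Q α z) = Q α ((Q α)^[n] z) :=
    Filter.Eventually.of_forall (Q_iter_comm α n)
  exact commute_germs_eq α hα f₁ ((Q α)^[n]) h₁ h₂ h₁0 h₂0 hd hc₁ hc₂
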